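/- Let A be a bounded linear operator on a complex Hilbert space H. Then w(A) ≥ (1/√2) · max{ ‖Re(A) + Im(A)‖ , ‖Re(A) − Im(A)‖ }. -/

import Mathlib

open ContinuousLinearMap Complex

variable {H : Type*} [NormedAddCommGroup H] [InnerProductSpace ℂ H] [CompleteSpace H]

noncomputable def nrad (A : H →L[ℂ] H) : ℝ :=
  ⨆ x : {x : H // ‖x‖ = 1}, ‖(inner ℂ (A x) (x : H) : ℂ)‖

noncomputable def reP (A : H →L[ℂ] H) : H →L[ℂ] H := (2 : ℂ)⁻¹ • (A + adjoint A)
noncomputable def imP (A : H →L[ℂ] H) : H →L[ℂ] H := (2 * Complex.I)⁻¹ • (A - adjoint A)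

noncomputable def oabs (A : H →L[ℂ] H) : H →L[ℂ] H := cfc Real.sqrt (adjoint A * A)

noncomputable def opow (T : H →L[ℂ] H) (r : ℝ) : H →L[ℂ] H := cfc (fun t : ℝ => t ^ r) T

lemma inner_sq_le (T : H →L[ℂ] H) {M : ℝ}
    (h : ∀ x : H, ‖x‖ = 1 → ‖(inner ℂ (T x) x : ℂ)‖ ≤ M) (z : H) :
    ‖(inner ℂ (T z) z : ℂ)‖ ≤ M * ‖z‖ ^ 2 := by
  rcases eq_or_ne z 0 with rfl | hz
  · simp
  · have hnz : ‖z‖ ≠ 0 := norm_ne_zero_iff.mpr hz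
    set c : ℂ := (‖z‖ : ℂ)⁻¹ with hc
    have hu : ‖c • z‖ = 1 := by
      simp [hc, norm_smul, hnz]
    have key := h (c • z) hu
    rw [map_smul, inner_smul_left, inner_smul_right, norm_mul, norm_mul] at key
    have hcn : ‖c‖ = ‖z‖⁻¹ := by simp [hc]
    rw [RCLike.norm_conj, hcn] at key
    have hpos : (0:ℝ) < ‖z‖ := lt_of_le_of_ne (norm_nonneg z) (Ne.symm hnz)
    have hkey2 := mul_le_mul_of_nonneg_right key (le_of_lt (pow_pos hpos 2))
    have hzz : ‖z‖⁻¹ * ‖z‖ = 1 := inv_mul_cancel₀ hnz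
    have hr : ‖z‖⁻¹ * (‖z‖⁻¹ * ‖(inner ℂ (T z) z : ℂ)‖) * ‖z‖^2 = ‖(inner ℂ (T z) z : ℂ)‖ := by
      calc ‖z‖⁻¹ * (‖z‖⁻¹ * ‖(inner ℂ (T z) z : ℂ)‖) * ‖z‖^2
          = (‖z‖⁻¹ * ‖z‖) * ((‖z‖⁻¹ * ‖z‖) * ‖(inner ℂ (T z) z : ℂ)‖) := by ring
        _ = ‖(inner ℂ (T z) z : ℂ)‖ := by rw [hzz]; ring
    linarith [hr ▸ hkey2]

lemma selfadj_norm_le (T : H →L[ℂ] H) (hT : adjoint T = T) {M : ℝ} (hM : 0 ≤ M)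
    (h : ∀ x : H, ‖x‖ = 1 → ‖(inner ℂ (T x) x : ℂ)‖ ≤ M) : ‖T‖ ≤ M := by
  have h2 := inner_sq_le T h
  have hsym : ∀ x y : H, (inner ℂ (T y) x : ℂ) = starRingEnd ℂ (inner ℂ (T x) y) := by
    intro x y
    calc (inner ℂ (T y) x : ℂ) = inner ℂ y (T x) := by
          conv_lhs => rw [← hT]
          rw [adjoint_inner_left]
      _ = starRingEnd ℂ (inner ℂ (T x) y) := (inner_conj_symm _ _).symm
  have hre : ∀ x y : H, ‖x‖ = 1 → ‖y‖ = 1 → ((inner ℂ (T x) y : ℂ).re : ℝ) ≤ M := by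
    intro x y hx hy
    have e1 : (inner ℂ (T (x+y)) (x+y) : ℂ) - inner ℂ (T (x-y)) (x-y)
        = 2 * (inner ℂ (T x) y + inner ℂ (T y) x) := by
      simp only [map_add, map_sub, inner_add_left, inner_add_right, inner_sub_left,
        inner_sub_right]
      ring
    have e2 : (inner ℂ (T x) y : ℂ) + inner ℂ (T y) x = 2 * ((inner ℂ (T x) y : ℂ).re : ℂ) := by
      rw [hsym x y, Complex.add_conj]
      push_cast
      ring
    have e3 : ((inner ℂ (T (x+y)) (x+y) : ℂ) - inner ℂ (T (x-y)) (x-y)).re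
        = 4 * (inner ℂ (T x) y : ℂ).re := by
      rw [e1, e2]; push_cast; ring_nf; simp
    have b1 : ‖(inner ℂ (T (x+y)) (x+y) : ℂ)‖ ≤ M * ‖x + y‖^2 := h2 _
    have b2 : ‖(inner ℂ (T (x-y)) (x-y) : ℂ)‖ ≤ M * ‖x - y‖^2 := h2 _
    have hpar : ‖x + y‖^2 + ‖x - y‖^2 = 2 * (‖x‖^2 + ‖y‖^2) := by
      have := parallelogram_law_with_norm ℂ x y
      simpa [← pow_two] using this
    have : 4 * (inner ℂ (T x) y : ℂ).re ≤ M * ‖x+y‖^2 + M * ‖x-y‖^2 := by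
      rw [← e3]
      calc ((inner ℂ (T (x+y)) (x+y) : ℂ) - inner ℂ (T (x-y)) (x-y)).re
          ≤ ‖(inner ℂ (T (x+y)) (x+y) : ℂ) - inner ℂ (T (x-y)) (x-y)‖ := Complex.re_le_norm _
        _ ≤ ‖(inner ℂ (T (x+y)) (x+y) : ℂ)‖ + ‖(inner ℂ (T (x-y)) (x-y) : ℂ)‖ := norm_sub_le _ _
        _ ≤ M * ‖x+y‖^2 + M * ‖x-y‖^2 := add_le_add b1 b2
    rw [hx, hy] at hpar
    have h4 : M * ‖x+y‖^2 + M * ‖x-y‖^2 = 4 * M := by rw [← mul_add, hpar]; ring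
    linarith
  have hnorm : ∀ x : H, ‖x‖ = 1 → ‖T x‖ ≤ M := by
    intro x hx
    rcases eq_or_ne (T x) 0 with h0 | h0
    · rw [h0]; simpa using hM
    · have hTx : ‖T x‖ ≠ 0 := norm_ne_zero_iff.mpr h0
      set y : H := ((‖T x‖ : ℂ))⁻¹ • T x with hy
      have hy1 : ‖y‖ = 1 := by simp [hy, norm_smul, hTx]
      have := hre x y hx hy1
      rw [hy, inner_smul_right] at this
      have hinner : (inner ℂ (T x) (T x) : ℂ) = (‖T x‖^2 : ℝ) := by
        rw [inner_self_eq_norm_sq_to_K]; norm_cast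
      rw [hinner] at this
      have hC : ((‖T x‖ : ℝ) : ℂ) ≠ 0 := Complex.ofReal_ne_zero.mpr hTx
      have hc : ((‖T x‖ : ℂ))⁻¹ * ((‖T x‖^2 : ℝ) : ℂ) = ((‖T x‖ : ℝ) : ℂ) := by
        push_cast
        rw [pow_two]
        field_simp
      rw [hc, Complex.ofReal_re] at this
      exact this
  apply T.opNorm_le_bound hM
  intro x
  rcases eq_or_ne x 0 with rfl | hx
  · simp
  · have hnz : ‖x‖ ≠ 0 := norm_ne_zero_iff.mpr hx
    have hu : ‖((‖x‖ : ℂ))⁻¹ • x‖ = 1 := by simp [norm_smul, hnz]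
    have := hnorm _ hu
    rw [map_smul, norm_smul] at this
    simp only [norm_inv, Complex.norm_real, Real.norm_eq_abs, abs_norm] at this
    calc ‖T x‖ = (‖x‖⁻¹ * ‖T x‖) * ‖x‖ := by field_simp
      _ ≤ M * ‖x‖ := mul_le_mul_of_nonneg_right this (norm_nonneg x)

lemma nrad_bdd (A : H →L[ℂ] H) :
    BddAbove (Set.range fun x : {x : H // ‖x‖ = 1} => ‖(inner ℂ (A x) (x : H) : ℂ)‖) := by
  refine ⟨‖A‖, ?_⟩
  rintro r ⟨⟨x, hx⟩, rfl⟩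
  calc ‖(inner ℂ (A x) x : ℂ)‖ ≤ ‖A x‖ * ‖x‖ := norm_inner_le_norm _ _
    _ ≤ (‖A‖ * ‖x‖) * ‖x‖ := mul_le_mul_of_nonneg_right (A.le_opNorm x) (norm_nonneg x)
    _ = ‖A‖ := by rw [hx]; ring

lemma nrad_nonneg (A : H →L[ℂ] H) : 0 ≤ nrad A :=
  Real.iSup_nonneg fun _ => norm_nonneg _

lemma inner_le_nrad (A : H →L[ℂ] H) (x : H) (hx : ‖x‖ = 1) :
    ‖(inner ℂ (A x) x : ℂ)‖ ≤ nrad A :=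
  le_ciSup (nrad_bdd A) (⟨x, hx⟩ : {x : H // ‖x‖ = 1})

lemma reP_selfadj (A : H →L[ℂ] H) : adjoint (reP A) = reP A := by
  unfold reP
  rw [map_smulₛₗ, map_add, adjoint_adjoint]
  have h2 : (starRingEnd ℂ) (2 : ℂ)⁻¹ = (2 : ℂ)⁻¹ := by
    rw [map_inv₀, Complex.conj_ofNat]
  rw [h2, add_comm]

lemma inner_reP (A : H →L[ℂ] H) (x : H) :
    (inner ℂ ((reP A) x) x : ℂ) = (((inner ℂ (A x) x : ℂ)).re : ℂ) := by
  unfold reP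
  rw [ContinuousLinearMap.smul_apply, ContinuousLinearMap.add_apply, inner_smul_left,
    inner_add_left, adjoint_inner_left, ← inner_conj_symm x (A x)]
  rw [Complex.add_conj]
  have h2 : (starRingEnd ℂ) (2 : ℂ)⁻¹ = (2 : ℂ)⁻¹ := by
    rw [map_inv₀, Complex.conj_ofNat]
  rw [h2]
  push_cast
  ring

lemma norm_reP_le (A : H →L[ℂ] H) : ‖reP A‖ ≤ nrad A := by
  apply selfadj_norm_le (reP A) (reP_selfadj A) (nrad_nonneg A)
  intro x hx
  rw [inner_reP]
  calc ‖(((inner ℂ (A x) x : ℂ)).re : ℂ)‖ = |((inner ℂ (A x) x : ℂ)).re| := by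
        rw [Complex.norm_real, Real.norm_eq_abs]
    _ ≤ ‖(inner ℂ (A x) x : ℂ)‖ := Complex.abs_re_le_norm _
    _ ≤ nrad A := inner_le_nrad A x hx

lemma nrad_smul_le (c : ℂ) (A : H →L[ℂ] H) : nrad (c • A) ≤ ‖c‖ * nrad A := by
  rcases isEmpty_or_nonempty {x : H // ‖x‖ = 1} with he | hne
  · haveI := he
    unfold nrad
    rw [Real.iSup_of_isEmpty, Real.iSup_of_isEmpty]
    simp
  · apply ciSup_le
    rintro ⟨x, hx⟩
    have : (inner ℂ ((c • A) x) x : ℂ) = starRingEnd ℂ c * inner ℂ (A x) x := by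
      rw [ContinuousLinearMap.smul_apply, inner_smul_left]
    rw [this, norm_mul, RCLike.norm_conj]
    exact mul_le_mul_of_nonneg_left (inner_le_nrad A x hx) (norm_nonneg c)

lemma reP_smul_one_sub_I (A : H →L[ℂ] H) : reP ((1 - Complex.I) • A) = reP A + imP A := by
  unfold reP imP
  rw [map_smulₛₗ]
  simp only [map_sub, Complex.conj_I, map_one, RingHom.id_apply]
  ext x
  simp only [ContinuousLinearMap.smul_apply, ContinuousLinearMap.add_apply,
    ContinuousLinearMap.sub_apply]
  match_scalars <;> (field_simp; ring_nf; simp [Complex.I_sq]; try ring)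

lemma reP_smul_one_add_I (A : H →L[ℂ] H) : reP ((1 + Complex.I) • A) = reP A - imP A := by
  unfold reP imP
  rw [map_smulₛₗ]
  simp only [map_add, Complex.conj_I, map_one, RingHom.id_apply]
  ext x
  simp only [ContinuousLinearMap.smul_apply, ContinuousLinearMap.add_apply,
    ContinuousLinearMap.sub_apply]
  match_scalars <;> (field_simp; ring_nf; simp [Complex.I_sq]; try ring)


theorem stmt1 (A : H →L[ℂ] H) :
    nrad A ≥ (1 / Real.sqrt 2) * max ‖reP A + imP A‖ ‖reP A - imP A‖ := by
  have hs2 : Real.sqrt 2 > 0 := Real.sqrt_pos.mpr (by norm_num)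
  have hn1 : ‖(1 - Complex.I)‖ = Real.sqrt 2 := by
    rw [Complex.norm_def, Complex.normSq_apply]
    norm_num
  have hn2 : ‖(1 + Complex.I)‖ = Real.sqrt 2 := by
    rw [Complex.norm_def, Complex.normSq_apply]
    norm_num
  have b1 : ‖reP A + imP A‖ ≤ Real.sqrt 2 * nrad A := by
    rw [← reP_smul_one_sub_I]
    calc ‖reP ((1 - Complex.I) • A)‖ ≤ nrad ((1 - Complex.I) • A) := norm_reP_le _
      _ ≤ ‖(1 - Complex.I)‖ * nrad A := nrad_smul_le _ _
      _ = Real.sqrt 2 * nrad A := by rw [hn1]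
  have b2 : ‖reP A - imP A‖ ≤ Real.sqrt 2 * nrad A := by
    rw [← reP_smul_one_add_I]
    calc ‖reP ((1 + Complex.I) • A)‖ ≤ nrad ((1 + Complex.I) • A) := norm_reP_le _
      _ ≤ ‖(1 + Complex.I)‖ * nrad A := nrad_smul_le _ _
      _ = Real.sqrt 2 * nrad A := by rw [hn2]
  have hmax : max ‖reP A + imP A‖ ‖reP A - imP A‖ ≤ Real.sqrt 2 * nrad A := max_le b1 b2
  rw [ge_iff_le, one_div, ← div_eq_inv_mul, div_le_iff₀ hs2, mul_comm]
  exact hmax
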